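/- Kochen-Specker Theorem: Let H be a finite-dimensional complex Hilbert space with dim(H) > 2. Then there is no global valuation on H, i.e., there is no function v assigning to every self-adjoint (bounded linear) operator A on H a real number v(A) such that (1) Value-Rule: v(A) belongs to the spectrum of A, and (2) Functional Composition Principle (FUNC): for every continuous function f : ℝ → ℝ, v(f(A)) = f(v(A)), where f(A) is given by the functional calculus for the self-adjoint operator A. -/

import Mathlib

set_option maxHeartbeats 1000000
set_option synthInstance.maxHeartbeats 400000

noncomputable section
set_option linter.unusedSectionVars false
variable {H : Type*} [NormedAddCommGroup H] [InnerProductSpace ℂ H] [FiniteDimensional ℂ H]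

open scoped InnerProductSpace ComplexConjugate

/-- rank one map `w ↦ ⟪x,w⟫ • x` -/
def rk (x : H) : H →L[ℂ] H := (innerSL ℂ x).smulRight x

lemma rk_apply (x w : H) : rk x w = ⟪x, w⟫_ℂ • x := rfl

/-- projection onto the line spanned by x (junk if x = 0) -/
def pr (x : H) : H →L[ℂ] H := (((‖x‖^2 : ℝ) : ℂ))⁻¹ • rk x

lemma pr_apply (x w : H) : pr x w = (((‖x‖^2 : ℝ) : ℂ))⁻¹ • ⟪x, w⟫_ℂ • x := rfl

lemma isSelfAdjoint_rk (x : H) : IsSelfAdjoint (rk x) := by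
  rw [ContinuousLinearMap.isSelfAdjoint_iff_isSymmetric]
  intro a b
  simp [rk_apply, inner_smul_left, inner_smul_right, mul_comm]

lemma isSelfAdjoint_pr (x : H) : IsSelfAdjoint (pr x) := by
  refine IsSelfAdjoint.smul ?_ (isSelfAdjoint_rk x)
  rw [IsSelfAdjoint, star_inv₀]
  norm_num [Complex.star_def, ← Complex.ofReal_pow, Complex.conj_ofReal]

lemma pr_orth {x y : H} (h : ⟪x, y⟫_ℂ = 0) : pr x * pr y = 0 := by
  ext w
  simp [ContinuousLinearMap.mul_apply, pr_apply, rk_apply, inner_smul_right, h,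
    mul_comm]

lemma pr_idem {x : H} (hx : x ≠ 0) : pr x * pr x = pr x := by
  ext w
  have hn : ((‖x‖^2 : ℝ) : ℂ) ≠ 0 := by
    simp [hx, norm_eq_zero, pow_eq_zero_iff]
  simp only [ContinuousLinearMap.mul_apply, pr_apply, inner_smul_right, smul_smul]
  rw [inner_self_eq_norm_sq_to_K (𝕜 := ℂ)]
  have hc : ((‖x‖ : ℂ)) ≠ 0 := by simpa using hx
  congr 1
  push_cast
  field_simp
  norm_cast
  exact mul_comm _ _
section Valuation

variable (v : (H →L[ℂ] H) → ℝ)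
  (hv : ∀ A : H →L[ℂ] H, IsSelfAdjoint A →
          v A ∈ spectrum ℝ A ∧
          ∀ f : ℝ → ℝ, Continuous f → v (cfc f A) = f (v A))
  (hH : 0 < Module.finrank ℂ H)

include hv hH

lemma v_one : v 1 = 1 := by
  have : Nontrivial H := Module.nontrivial_of_finrank_pos hH
  have h := (hv 1 (IsSelfAdjoint.one _)).1
  rwa [spectrum.one_eq, Set.mem_singleton_iff] at h

lemma v_zero : v 0 = 0 := by
  have : Nontrivial H := Module.nontrivial_of_finrank_pos hH
  have h := (hv 0 (IsSelfAdjoint.zero _)).1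
  rwa [spectrum.zero_eq, Set.mem_singleton_iff] at h

lemma v_proj01 {P : H →L[ℂ] H} (h1 : IsSelfAdjoint P) (h2 : P * P = P) :
    v P = 0 ∨ v P = 1 := by
  have hf := (hv P h1).2 (fun t => t * t - t) (by fun_prop)
  rw [cfc_sub _ _ P, cfc_mul _ _ P, cfc_id' ℝ P, h2, sub_self, v_zero v hv hH] at hf
  have hf' : (0:ℝ) = v P * v P - v P := hf
  have : v P * (v P - 1) = 0 := by rw [mul_sub, mul_one]; linarith
  rcases mul_eq_zero.mp this with h | h
  · exact Or.inl h
  · exact Or.inr (by linarith)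

lemma v_add_proj {P Q : H →L[ℂ] H} (hP : IsSelfAdjoint P) (hPP : P * P = P)
    (hQ : IsSelfAdjoint Q) (hQQ : Q * Q = Q) (hPQ : P * Q = 0) (hQP : Q * P = 0) :
    v (P + Q) = v P + v Q := by
  set A := P + (Q + Q) with hA
  have hAsa : IsSelfAdjoint A := hP.add (hQ.add hQ)
  have hAsq : A * A = P + (Q + Q + Q + Q) := by
    simp only [hA, mul_add, add_mul, hPP, hQQ, hPQ, hQP, add_zero, zero_add]
    abel
  have hcf : cfc (fun t : ℝ => 2 * t - t * t) A = P := by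
    rw [cfc_sub _ _ A, cfc_const_mul _ _ A, cfc_mul _ _ A, cfc_id' ℝ A, hAsq, two_smul]
    rw [hA]; abel
  have hcg : cfc (fun t : ℝ => 2⁻¹ * (t * t) - 2⁻¹ * t) A = Q := by
    rw [cfc_sub _ _ A, cfc_const_mul _ _ A, cfc_const_mul _ _ A, cfc_mul _ _ A,
      cfc_id' ℝ A, hAsq]
    have : P + (Q + Q + Q + Q) = A + (Q + Q) := by rw [hA]; abel
    rw [this, smul_add, sub_eq_iff_eq_add]
    have h2 : (2⁻¹ : ℝ) • (Q + Q) = Q := by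
      rw [← two_smul ℝ Q, smul_smul]; norm_num
    rw [h2]; abel
  have hch : cfc (fun t : ℝ => (2 * t - t * t) + (2⁻¹ * (t * t) - 2⁻¹ * t)) A = P + Q := by
    rw [cfc_add (a := A) (fun t : ℝ => 2 * t - t * t) (fun t : ℝ => 2⁻¹ * (t * t) - 2⁻¹ * t), hcf, hcg]
  have h1 := (hv A hAsa).2 _ (show Continuous (fun t : ℝ => 2 * t - t * t) by fun_prop)
  have h2 := (hv A hAsa).2 _
    (show Continuous (fun t : ℝ => 2⁻¹ * (t * t) - 2⁻¹ * t) by fun_prop)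
  have h3 := (hv A hAsa).2 _
    (show Continuous (fun t : ℝ => (2 * t - t * t) + (2⁻¹ * (t * t) - 2⁻¹ * t)) by fun_prop)
  rw [hcf] at h1
  rw [hcg] at h2
  rw [hch] at h3
  rw [h3, h1, h2]

lemma v_sum_proj {ι : Type*} [DecidableEq ι] (P : ι → (H →L[ℂ] H))
    (hsa : ∀ i, IsSelfAdjoint (P i)) (hidem : ∀ i, P i * P i = P i)
    (horth : ∀ i j, i ≠ j → P i * P j = 0) (s : Finset ι) :
    IsSelfAdjoint (∑ i ∈ s, P i) ∧ (∑ i ∈ s, P i) * (∑ i ∈ s, P i) = (∑ i ∈ s, P i) ∧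
      v (∑ i ∈ s, P i) = ∑ i ∈ s, v (P i) := by
  classical
  induction s using Finset.induction_on with
  | empty =>
    refine ⟨by simpa using IsSelfAdjoint.zero _, by simp, by simp [v_zero v hv hH]⟩
  | @insert a s ha ih =>
    obtain ⟨ihsa, ihidem, ihsum⟩ := ih
    rw [Finset.sum_insert ha]
    set S := ∑ i ∈ s, P i with hS
    have hPaS : P a * S = 0 := by
      rw [hS, Finset.mul_sum]
      exact Finset.sum_eq_zero fun i hi => horth a i (fun h => ha (h ▸ hi))
    have hSPa : S * P a = 0 := by
      rw [hS, Finset.sum_mul]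
      exact Finset.sum_eq_zero fun i hi => horth i a (fun h => ha (h ▸ hi))
    refine ⟨(hsa a).add ihsa, ?_, ?_⟩
    · simp only [mul_add, add_mul, hidem a, ihidem, hPaS, hSPa, add_zero, zero_add]
    · rw [v_add_proj v hv hH (hsa a) (hidem a) ihsa ihidem hPaS hSPa,
        Finset.sum_insert ha, ihsum]

end Valuation

section Trace

/-- trace-like functional w.r.t. the standard orthonormal basis -/
def tr (A : H →L[ℂ] H) : ℂ :=
  ∑ i, ⟪(stdOrthonormalBasis ℂ H) i, A ((stdOrthonormalBasis ℂ H) i)⟫_ℂ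

lemma tr_add (A B : H →L[ℂ] H) : tr (A + B) = tr A + tr B := by
  simp [tr, inner_add_right, Finset.sum_add_distrib]

lemma tr_sub (A B : H →L[ℂ] H) : tr (A - B) = tr A - tr B := by
  simp [tr, inner_sub_right, Finset.sum_sub_distrib]

lemma tr_pr {x : H} (hx : x ≠ 0) : tr (pr x) = 1 := by
  have hc : ((‖x‖ : ℂ)) ≠ 0 := by simpa using hx
  simp only [tr, pr_apply, inner_smul_right]
  rw [← Finset.mul_sum]
  rw [(stdOrthonormalBasis ℂ H).sum_inner_mul_inner x x]
  rw [inner_self_eq_norm_sq_to_K (𝕜 := ℂ)]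
  push_cast
  field_simp
  norm_cast

lemma proj_eq_zero_of_tr {R : H →L[ℂ] H} (hsa : IsSelfAdjoint R) (hidem : R * R = R)
    (htr : tr R = 0) : R = 0 := by
  set b := stdOrthonormalBasis ℂ H with hb
  have hterm : ∀ i, ⟪b i, R (b i)⟫_ℂ = ((‖R (b i)‖ : ℂ))^2 := by
    intro i
    have h1 : R (b i) = R (R (b i)) := by
      rw [← ContinuousLinearMap.mul_apply, hidem]
    have h2 : ⟪b i, R (R (b i))⟫_ℂ = ⟪R (b i), R (b i)⟫_ℂ :=
      (ContinuousLinearMap.isSelfAdjoint_iff_isSymmetric.mp hsa (b i) (R (b i))).symm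
    calc ⟪b i, R (b i)⟫_ℂ = ⟪b i, R (R (b i))⟫_ℂ := by rw [← h1]
      _ = ⟪R (b i), R (b i)⟫_ℂ := h2
      _ = ((‖R (b i)‖ : ℂ))^2 := inner_self_eq_norm_sq_to_K _

  have hsum : ∑ i, ((‖R (b i)‖ : ℝ))^2 = 0 := by
    have := htr
    simp only [tr, hterm] at this
    have h2 : ((∑ i, ((‖R (b i)‖ : ℝ))^2 : ℝ) : ℂ) = 0 := by
      push_cast
      rw [← this]
      exact Finset.sum_congr rfl (fun i _ => (hterm i).symm)
    exact_mod_cast h2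
  have hzero : ∀ i, R (b i) = 0 := by
    intro i
    have := (Finset.sum_eq_zero_iff_of_nonneg (fun i _ => sq_nonneg ‖R (b i)‖)).mp hsum i
      (Finset.mem_univ i)
    simpa [pow_eq_zero_iff] using this
  ext w
  have hw := b.sum_repr' w
  rw [← hw, map_sum]
  simp [hzero]

end Trace

section Embed

lemma sum_proj {ι : Type*} [DecidableEq ι] (P : ι → (H →L[ℂ] H))
    (hsa : ∀ i, IsSelfAdjoint (P i)) (hidem : ∀ i, P i * P i = P i)
    (horth : ∀ i j, i ≠ j → P i * P j = 0) (s : Finset ι) :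
    IsSelfAdjoint (∑ i ∈ s, P i) ∧ (∑ i ∈ s, P i) * (∑ i ∈ s, P i) = (∑ i ∈ s, P i) := by
  classical
  induction s using Finset.induction_on with
  | empty => exact ⟨by simpa using IsSelfAdjoint.zero _, by simp⟩
  | @insert a s ha ih =>
    obtain ⟨ihsa, ihidem⟩ := ih
    rw [Finset.sum_insert ha]
    set S := ∑ i ∈ s, P i with hS
    have hPaS : P a * S = 0 := by
      rw [hS, Finset.mul_sum]
      exact Finset.sum_eq_zero fun i hi => horth a i (fun h => ha (h ▸ hi))
    have hSPa : S * P a = 0 := by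
      rw [hS, Finset.sum_mul]
      exact Finset.sum_eq_zero fun i hi => horth i a (fun h => ha (h ▸ hi))
    exact ⟨(hsa a).add ihsa,
      by simp only [mul_add, add_mul, hidem a, ihidem, hPaS, hSPa, add_zero, zero_add]⟩

/-- the vector of `H` with integer coordinates `a` w.r.t. the family `f` -/
def yv (f : Fin 3 → H) (a : Fin 3 → ℤ) : H := ∑ k, (a k : ℂ) • f k

/-- integer dot product on `ℤ³` -/
def dotZ (a b : Fin 3 → ℤ) : ℤ := a 0 * b 0 + a 1 * b 1 + a 2 * b 2

variable {f : Fin 3 → H}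

lemma inner_yv (hf : Orthonormal ℂ f) (a c : Fin 3 → ℤ) :
    ⟪yv f a, yv f c⟫_ℂ = ((dotZ a c : ℤ) : ℂ) := by
  simp only [yv, sum_inner, inner_sum, inner_smul_left, inner_smul_right,
    orthonormal_iff_ite.mp hf, dotZ]
  simp [Fin.sum_univ_three, Finset.mul_sum]
  push_cast
  ring

lemma inner_f_yv (hf : Orthonormal ℂ f) (k : Fin 3) (a : Fin 3 → ℤ) :
    ⟪f k, yv f a⟫_ℂ = ((a k : ℤ) : ℂ) := by
  simp [yv, inner_sum, inner_smul_right, orthonormal_iff_ite.mp hf]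

lemma yv_ne_zero (hf : Orthonormal ℂ f) {a : Fin 3 → ℤ} (ha : a ≠ 0) : yv f a ≠ 0 := by
  intro h
  have h1 : ((dotZ a a : ℤ) : ℂ) = 0 := by
    rw [← inner_yv hf a a, h, inner_zero_left]
  have h2 : dotZ a a = 0 := by exact_mod_cast h1
  apply ha
  simp only [dotZ] at h2
  have e0 : a 0 = 0 := mul_self_eq_zero.mp (by nlinarith [mul_self_nonneg (a 1), mul_self_nonneg (a 2)])
  have e1 : a 1 = 0 := mul_self_eq_zero.mp (by nlinarith [mul_self_nonneg (a 0), mul_self_nonneg (a 2)])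
  have e2 : a 2 = 0 := mul_self_eq_zero.mp (by nlinarith [mul_self_nonneg (a 0), mul_self_nonneg (a 1)])
  funext i
  fin_cases i <;> simpa using ‹_›

lemma pr_unit_apply {x : H} (hx : ‖x‖ = 1) (w : H) : pr x w = ⟪x, w⟫_ℂ • x := by
  rw [pr_apply, hx]
  norm_num

lemma E_apply_yv (hf : Orthonormal ℂ f) (a : Fin 3 → ℤ) :
    (∑ k : Fin 3, pr (f k)) (yv f a) = yv f a := by
  rw [ContinuousLinearMap.sum_apply]
  have : ∀ k : Fin 3, pr (f k) (yv f a) = ((a k : ℤ) : ℂ) • f k := by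
    intro k
    rw [pr_unit_apply (hf.1 k), inner_f_yv hf]
  rw [Finset.sum_congr rfl (fun k _ => this k)]
  rfl

lemma pr_comp_right {E : H →L[ℂ] H} {x : H} (hEx : E x = x) : E * pr x = pr x := by
  ext w
  simp [ContinuousLinearMap.mul_apply, pr_apply, hEx]

lemma pr_comp_left {E : H →L[ℂ] H} {x : H} (hsa : IsSelfAdjoint E) (hEx : E x = x) :
    pr x * E = pr x := by
  ext w
  have h : ⟪x, E w⟫_ℂ = ⟪x, w⟫_ℂ := by
    have h2 := ContinuousLinearMap.isSelfAdjoint_iff_isSymmetric.mp hsa x w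
    exact h2.symm.trans (congrArg (fun z => ⟪z, w⟫_ℂ) hEx)
  simp [ContinuousLinearMap.mul_apply, pr_apply, h]

lemma sum_pr_eq (hf : Orthonormal ℂ f) (a : Fin 3 → (Fin 3 → ℤ)) (hnz : ∀ i, a i ≠ 0)
    (horth : ∀ i j, i ≠ j → dotZ (a i) (a j) = 0) :
    ∑ i : Fin 3, pr (yv f (a i)) = ∑ k : Fin 3, pr (f k) := by
  classical
  set S := ∑ i : Fin 3, pr (yv f (a i)) with hSdef
  set E := ∑ k : Fin 3, pr (f k) with hEdef
  have hEproj := sum_proj (fun k => pr (f k)) (fun k => isSelfAdjoint_pr _)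
    (fun k => pr_idem (hf.ne_zero k))
    (fun i j hij => pr_orth (orthonormal_iff_ite.mp hf i j ▸ by simp [hij]))
    Finset.univ
  have hSproj := sum_proj (fun i => pr (yv f (a i))) (fun i => isSelfAdjoint_pr _)
    (fun i => pr_idem (yv_ne_zero hf (hnz i)))
    (fun i j hij => pr_orth (by rw [inner_yv hf, horth i j hij]; norm_num))
    Finset.univ
  have hES : E * S = S := by
    rw [hSdef, Finset.mul_sum]
    exact Finset.sum_congr rfl fun i _ => pr_comp_right (E_apply_yv hf (a i))
  have hSE : S * E = S := by
    rw [hSdef, Finset.sum_mul]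
    exact Finset.sum_congr rfl fun i _ => pr_comp_left hEproj.1 (E_apply_yv hf (a i))
  have hRsa : IsSelfAdjoint (E - S) := hEproj.1.sub hSproj.1
  have hRidem : (E - S) * (E - S) = E - S := by
    rw [mul_sub, sub_mul, sub_mul, hEproj.2, hES, hSE, hSproj.2]
    abel
  have htrE : tr E = 3 := by
    rw [hEdef, Fin.sum_univ_three, tr_add, tr_add, tr_pr (hf.ne_zero 0),
      tr_pr (hf.ne_zero 1), tr_pr (hf.ne_zero 2)]
    norm_num
  have htrS : tr S = 3 := by
    rw [hSdef, Fin.sum_univ_three, tr_add, tr_add, tr_pr (yv_ne_zero hf (hnz 0)),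
      tr_pr (yv_ne_zero hf (hnz 1)), tr_pr (yv_ne_zero hf (hnz 2))]
    norm_num
  have htrR : tr (E - S) = 0 := by rw [tr_sub, htrE, htrS]; ring
  have := proj_eq_zero_of_tr hRsa hRidem htrR
  have h0 : E = S := by
    have := sub_eq_zero.mp this
    exact this
  exact h0.symm

end Embed

section Main

variable (v : (H →L[ℂ] H) → ℝ)
  (hv : ∀ A : H →L[ℂ] H, IsSelfAdjoint A →
          v A ∈ spectrum ℝ A ∧
          ∀ f : ℝ → ℝ, Continuous f → v (cfc f A) = f (v A))
  (hH : 0 < Module.finrank ℂ H)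

include hv hH

lemma v_pr01 {x : H} (hx : x ≠ 0) : v (pr x) = 0 ∨ v (pr x) = 1 :=
  v_proj01 v hv hH (isSelfAdjoint_pr x) (pr_idem hx)

/-- the sum rule for an orthonormal triple given by integer coordinates -/
lemma triple_rule {f : Fin 3 → H} (hf : Orthonormal ℂ f) (hE1 : v (∑ k : Fin 3, pr (f k)) = 1)
    (p q r : Fin 3 → ℤ) (hp : p ≠ 0) (hq : q ≠ 0) (hr : r ≠ 0)
    (hpq : dotZ p q = 0) (hpr : dotZ p r = 0) (hqr : dotZ q r = 0) :
    v (pr (yv f p)) + v (pr (yv f q)) + v (pr (yv f r)) = 1 := by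
  classical
  set a : Fin 3 → (Fin 3 → ℤ) := ![p, q, r] with ha
  have hdc : ∀ x y, dotZ x y = 0 → dotZ y x = 0 := by
    intro x y h
    simp only [dotZ] at *
    linarith
  have hnz : ∀ i, a i ≠ 0 := by
    intro i; fin_cases i <;> simpa [ha] using ‹_›
  have horth : ∀ i j, i ≠ j → dotZ (a i) (a j) = 0 := by
    intro i j hij
    fin_cases i <;> fin_cases j <;>
      simp_all [ha] <;>
        first | exact hpq | exact hpr | exact hdc _ _ hpq | exact hqr | exact hdc _ _ hpr | exact hdc _ _ hqr
  have hkey := sum_pr_eq hf a hnz horth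
  have hsum := (v_sum_proj v hv hH (fun i => pr (yv f (a i))) (fun i => isSelfAdjoint_pr _)
    (fun i => pr_idem (yv_ne_zero hf (hnz i)))
    (fun i j hij => pr_orth (by rw [inner_yv hf, horth i j hij]; norm_num))
    Finset.univ).2.2
  rw [hkey, hE1] at hsum
  have : ∑ i : Fin 3, v (pr (yv f (a i))) =
      v (pr (yv f p)) + v (pr (yv f q)) + v (pr (yv f r)) := by
    rw [Fin.sum_univ_three]
    simp [ha]
  rw [this] at hsum
  linarith

omit hv hH in
lemma sum_pr_basis : ∑ i, pr ((stdOrthonormalBasis ℂ H) i) = 1 := by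
  ext w
  rw [ContinuousLinearMap.sum_apply]
  have h1 : ∀ i, pr ((stdOrthonormalBasis ℂ H) i) w
      = ⟪(stdOrthonormalBasis ℂ H) i, w⟫_ℂ • (stdOrthonormalBasis ℂ H) i := by
    intro i
    exact pr_unit_apply ((stdOrthonormalBasis ℂ H).orthonormal.1 i) w
  rw [Finset.sum_congr rfl (fun i _ => h1 i), (stdOrthonormalBasis ℂ H).sum_repr' w]
  rfl

lemma exists_good_f (hdim : 2 < Module.finrank ℂ H) :
    ∃ f : Fin 3 → H, Orthonormal ℂ f ∧ v (∑ k : Fin 3, pr (f k)) = 1 := by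
  classical
  set b := stdOrthonormalBasis ℂ H with hb
  have hborth := b.orthonormal
  have hprorth : ∀ i j, i ≠ j → pr (b i) * pr (b j) = 0 := fun i j hij =>
    pr_orth (by simpa [hij] using orthonormal_iff_ite.mp hborth i j)
  have hsum := (v_sum_proj v hv hH (fun i => pr (b i)) (fun i => isSelfAdjoint_pr _)
    (fun i => pr_idem (hborth.ne_zero i)) hprorth Finset.univ).2.2
  rw [show ∑ i, pr (b i) = 1 from sum_pr_basis] at hsum
  rw [v_one v hv hH] at hsum
  have hex : ∃ i0, v (pr (b i0)) ≠ 0 := by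
    by_contra hall
    push_neg at hall
    rw [Finset.sum_eq_zero (fun i _ => hall i)] at hsum
    norm_num at hsum
  obtain ⟨i0, hi0⟩ := hex
  have hi01 : v (pr (b i0)) = 1 := by
    rcases v_pr01 v hv hH (hborth.ne_zero i0) with h | h
    · exact absurd h hi0
    · exact h
  have h3n : 3 ≤ Module.finrank ℂ H := hdim
  set z : Fin (Module.finrank ℂ H) := ⟨0, by omega⟩ with hz
  set g : Fin 3 → Fin (Module.finrank ℂ H) :=
    fun k => Equiv.swap z i0 (Fin.castLE h3n k) with hg
  have hginj : Function.Injective g := by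
    intro x y hxy
    exact Fin.castLE_injective h3n ((Equiv.swap z i0).injective hxy)
  refine ⟨b ∘ g, hborth.comp g hginj, ?_⟩
  have hf0 : (b ∘ g) 0 = b i0 := by
    have hgz : g 0 = i0 := by
      simp only [hg]
      rw [show Fin.castLE h3n 0 = z from rfl, Equiv.swap_apply_left]
    simp [Function.comp, hgz]
  set f : Fin 3 → H := b ∘ g with hfdef
  have hforth : Orthonormal ℂ f := hborth.comp g hginj
  have hfprorth : ∀ i j, i ≠ j → pr (f i) * pr (f j) = 0 := fun i j hij =>
    pr_orth (by simpa [hij] using orthonormal_iff_ite.mp hforth i j)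
  have hEproj := sum_proj (fun k => pr (f k)) (fun k => isSelfAdjoint_pr _)
    (fun k => pr_idem (hforth.ne_zero k)) hfprorth Finset.univ
  have hEsum := (v_sum_proj v hv hH (fun k => pr (f k)) (fun k => isSelfAdjoint_pr _)
    (fun k => pr_idem (hforth.ne_zero k)) hfprorth Finset.univ).2.2
  have hE01 := v_proj01 v hv hH hEproj.1 hEproj.2
  rw [Fin.sum_univ_three (fun k => v (pr (f k)))] at hEsum
  have h0 : v (pr (f 0)) = 1 := by rw [hf0]; exact hi01
  rcases v_pr01 v hv hH (hforth.ne_zero 1) with h1 | h1 <;>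
    rcases v_pr01 v hv hH (hforth.ne_zero 2) with h2 | h2 <;>
      rcases hE01 with hE | hE <;> linarith

end Main
end

set_option maxHeartbeats 2000000 in
lemma ks_contra
    (c0 c1 c2 c3 c4 c5 c6 c7 c8 c9 c10 c11 c12 c13 c14 c15 c16 c17 c18 c19 c20 c21 c22 c23 c24 c25 c26 c27 c28 c29 c30 c31 c32 c33 c34 c35 c36 c37 c38 c39 c40 c41 c42 c43 c44 c45 c46 c47 c48 c49 c50 : ℝ)
    (h0 : c0 = 0 ∨ c0 = 1)
    (h1 : c1 = 0 ∨ c1 = 1)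
    (h2 : c2 = 0 ∨ c2 = 1)
    (h3 : c3 = 0 ∨ c3 = 1)
    (h4 : c4 = 0 ∨ c4 = 1)
    (h5 : c5 = 0 ∨ c5 = 1)
    (h6 : c6 = 0 ∨ c6 = 1)
    (h7 : c7 = 0 ∨ c7 = 1)
    (h8 : c8 = 0 ∨ c8 = 1)
    (h9 : c9 = 0 ∨ c9 = 1)
    (h10 : c10 = 0 ∨ c10 = 1)
    (h11 : c11 = 0 ∨ c11 = 1)
    (h12 : c12 = 0 ∨ c12 = 1)
    (h13 : c13 = 0 ∨ c13 = 1)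
    (h14 : c14 = 0 ∨ c14 = 1)
    (h15 : c15 = 0 ∨ c15 = 1)
    (h16 : c16 = 0 ∨ c16 = 1)
    (h17 : c17 = 0 ∨ c17 = 1)
    (h18 : c18 = 0 ∨ c18 = 1)
    (h19 : c19 = 0 ∨ c19 = 1)
    (h20 : c20 = 0 ∨ c20 = 1)
    (h21 : c21 = 0 ∨ c21 = 1)
    (h22 : c22 = 0 ∨ c22 = 1)
    (h23 : c23 = 0 ∨ c23 = 1)
    (h24 : c24 = 0 ∨ c24 = 1)
    (h25 : c25 = 0 ∨ c25 = 1)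
    (h26 : c26 = 0 ∨ c26 = 1)
    (h27 : c27 = 0 ∨ c27 = 1)
    (h28 : c28 = 0 ∨ c28 = 1)
    (h29 : c29 = 0 ∨ c29 = 1)
    (h30 : c30 = 0 ∨ c30 = 1)
    (h31 : c31 = 0 ∨ c31 = 1)
    (h32 : c32 = 0 ∨ c32 = 1)
    (h33 : c33 = 0 ∨ c33 = 1)
    (h34 : c34 = 0 ∨ c34 = 1)
    (h35 : c35 = 0 ∨ c35 = 1)
    (h36 : c36 = 0 ∨ c36 = 1)
    (h37 : c37 = 0 ∨ c37 = 1)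
    (h38 : c38 = 0 ∨ c38 = 1)
    (h39 : c39 = 0 ∨ c39 = 1)
    (h40 : c40 = 0 ∨ c40 = 1)
    (h41 : c41 = 0 ∨ c41 = 1)
    (h42 : c42 = 0 ∨ c42 = 1)
    (h43 : c43 = 0 ∨ c43 = 1)
    (h44 : c44 = 0 ∨ c44 = 1)
    (h45 : c45 = 0 ∨ c45 = 1)
    (h46 : c46 = 0 ∨ c46 = 1)
    (h47 : c47 = 0 ∨ c47 = 1)
    (h48 : c48 = 0 ∨ c48 = 1)
    (h49 : c49 = 0 ∨ c49 = 1)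
    (h50 : c50 = 0 ∨ c50 = 1)
    (t0 : c0 + c3 + c19 = 1)
    (t1 : c0 + c9 + c44 = 1)
    (t2 : c0 + c14 + c24 = 1)
    (t3 : c0 + c29 + c37 = 1)
    (t4 : c1 + c5 + c19 = 1)
    (t5 : c1 + c8 + c50 = 1)
    (t6 : c1 + c30 + c47 = 1)
    (t7 : c2 + c4 + c19 = 1)
    (t8 : c2 + c13 + c45 = 1)
    (t9 : c2 + c25 + c36 = 1)
    (t10 : c3 + c17 + c41 = 1)
    (t11 : c3 + c18 + c20 = 1)
    (t12 : c3 + c21 + c40 = 1)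
    (t13 : c4 + c15 + c43 = 1)
    (t14 : c4 + c23 + c38 = 1)
    (t15 : c5 + c16 + c49 = 1)
    (t16 : c5 + c22 + c48 = 1)
    (t17 : c6 + c22 + c41 = 1)
    (t18 : c7 + c10 + c44 = 1)
    (t19 : c8 + c11 + c44 = 1)
    (t20 : c8 + c20 + c23 = 1)
    (t21 : c9 + c42 + c45 = 1)
    (t22 : c10 + c18 + c25 = 1)
    (t23 : c12 + c15 + c24 = 1)
    (t24 : c12 + c31 + c41 = 1)
    (t25 : c13 + c16 + c24 = 1)
    (t26 : c13 + c20 + c28 = 1)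
    (t27 : c14 + c22 + c25 = 1)
    (t28 : c14 + c23 + c26 = 1)
    (t29 : c15 + c18 + c30 = 1)
    (t30 : c16 + c32 + c40 = 1)
    (t31 : c17 + c34 + c45 = 1)
    (t32 : c17 + c38 + c46 = 1)
    (t33 : c21 + c33 + c43 = 1)
    (t34 : c27 + c30 + c37 = 1)
    (t35 : c29 + c35 + c38 = 1)
    (t36 : c29 + c36 + c39 = 1)
    : False := by
  have lb0 : (0:ℝ) ≤ c0 := by rcases h0 with h|h <;> linarith
  have ub0 : c0 ≤ 1 := by rcases h0 with h|h <;> linarith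
  have lb1 : (0:ℝ) ≤ c1 := by rcases h1 with h|h <;> linarith
  have ub1 : c1 ≤ 1 := by rcases h1 with h|h <;> linarith
  have lb2 : (0:ℝ) ≤ c2 := by rcases h2 with h|h <;> linarith
  have ub2 : c2 ≤ 1 := by rcases h2 with h|h <;> linarith
  have lb3 : (0:ℝ) ≤ c3 := by rcases h3 with h|h <;> linarith
  have ub3 : c3 ≤ 1 := by rcases h3 with h|h <;> linarith
  have lb4 : (0:ℝ) ≤ c4 := by rcases h4 with h|h <;> linarith
  have ub4 : c4 ≤ 1 := by rcases h4 with h|h <;> linarith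
  have lb5 : (0:ℝ) ≤ c5 := by rcases h5 with h|h <;> linarith
  have ub5 : c5 ≤ 1 := by rcases h5 with h|h <;> linarith
  have lb6 : (0:ℝ) ≤ c6 := by rcases h6 with h|h <;> linarith
  have ub6 : c6 ≤ 1 := by rcases h6 with h|h <;> linarith
  have lb7 : (0:ℝ) ≤ c7 := by rcases h7 with h|h <;> linarith
  have ub7 : c7 ≤ 1 := by rcases h7 with h|h <;> linarith
  have lb8 : (0:ℝ) ≤ c8 := by rcases h8 with h|h <;> linarith
  have ub8 : c8 ≤ 1 := by rcases h8 with h|h <;> linarith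
  have lb9 : (0:ℝ) ≤ c9 := by rcases h9 with h|h <;> linarith
  have ub9 : c9 ≤ 1 := by rcases h9 with h|h <;> linarith
  have lb10 : (0:ℝ) ≤ c10 := by rcases h10 with h|h <;> linarith
  have ub10 : c10 ≤ 1 := by rcases h10 with h|h <;> linarith
  have lb11 : (0:ℝ) ≤ c11 := by rcases h11 with h|h <;> linarith
  have ub11 : c11 ≤ 1 := by rcases h11 with h|h <;> linarith
  have lb12 : (0:ℝ) ≤ c12 := by rcases h12 with h|h <;> linarith
  have ub12 : c12 ≤ 1 := by rcases h12 with h|h <;> linarith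
  have lb13 : (0:ℝ) ≤ c13 := by rcases h13 with h|h <;> linarith
  have ub13 : c13 ≤ 1 := by rcases h13 with h|h <;> linarith
  have lb14 : (0:ℝ) ≤ c14 := by rcases h14 with h|h <;> linarith
  have ub14 : c14 ≤ 1 := by rcases h14 with h|h <;> linarith
  have lb15 : (0:ℝ) ≤ c15 := by rcases h15 with h|h <;> linarith
  have ub15 : c15 ≤ 1 := by rcases h15 with h|h <;> linarith
  have lb16 : (0:ℝ) ≤ c16 := by rcases h16 with h|h <;> linarith
  have ub16 : c16 ≤ 1 := by rcases h16 with h|h <;> linarith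
  have lb17 : (0:ℝ) ≤ c17 := by rcases h17 with h|h <;> linarith
  have ub17 : c17 ≤ 1 := by rcases h17 with h|h <;> linarith
  have lb18 : (0:ℝ) ≤ c18 := by rcases h18 with h|h <;> linarith
  have ub18 : c18 ≤ 1 := by rcases h18 with h|h <;> linarith
  have lb19 : (0:ℝ) ≤ c19 := by rcases h19 with h|h <;> linarith
  have ub19 : c19 ≤ 1 := by rcases h19 with h|h <;> linarith
  have lb20 : (0:ℝ) ≤ c20 := by rcases h20 with h|h <;> linarith
  have ub20 : c20 ≤ 1 := by rcases h20 with h|h <;> linarith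
  have lb21 : (0:ℝ) ≤ c21 := by rcases h21 with h|h <;> linarith
  have ub21 : c21 ≤ 1 := by rcases h21 with h|h <;> linarith
  have lb22 : (0:ℝ) ≤ c22 := by rcases h22 with h|h <;> linarith
  have ub22 : c22 ≤ 1 := by rcases h22 with h|h <;> linarith
  have lb23 : (0:ℝ) ≤ c23 := by rcases h23 with h|h <;> linarith
  have ub23 : c23 ≤ 1 := by rcases h23 with h|h <;> linarith
  have lb24 : (0:ℝ) ≤ c24 := by rcases h24 with h|h <;> linarith
  have ub24 : c24 ≤ 1 := by rcases h24 with h|h <;> linarith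
  have lb25 : (0:ℝ) ≤ c25 := by rcases h25 with h|h <;> linarith
  have ub25 : c25 ≤ 1 := by rcases h25 with h|h <;> linarith
  have lb26 : (0:ℝ) ≤ c26 := by rcases h26 with h|h <;> linarith
  have ub26 : c26 ≤ 1 := by rcases h26 with h|h <;> linarith
  have lb27 : (0:ℝ) ≤ c27 := by rcases h27 with h|h <;> linarith
  have ub27 : c27 ≤ 1 := by rcases h27 with h|h <;> linarith
  have lb28 : (0:ℝ) ≤ c28 := by rcases h28 with h|h <;> linarith
  have ub28 : c28 ≤ 1 := by rcases h28 with h|h <;> linarith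
  have lb29 : (0:ℝ) ≤ c29 := by rcases h29 with h|h <;> linarith
  have ub29 : c29 ≤ 1 := by rcases h29 with h|h <;> linarith
  have lb30 : (0:ℝ) ≤ c30 := by rcases h30 with h|h <;> linarith
  have ub30 : c30 ≤ 1 := by rcases h30 with h|h <;> linarith
  have lb31 : (0:ℝ) ≤ c31 := by rcases h31 with h|h <;> linarith
  have ub31 : c31 ≤ 1 := by rcases h31 with h|h <;> linarith
  have lb32 : (0:ℝ) ≤ c32 := by rcases h32 with h|h <;> linarith
  have ub32 : c32 ≤ 1 := by rcases h32 with h|h <;> linarith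
  have lb33 : (0:ℝ) ≤ c33 := by rcases h33 with h|h <;> linarith
  have ub33 : c33 ≤ 1 := by rcases h33 with h|h <;> linarith
  have lb34 : (0:ℝ) ≤ c34 := by rcases h34 with h|h <;> linarith
  have ub34 : c34 ≤ 1 := by rcases h34 with h|h <;> linarith
  have lb35 : (0:ℝ) ≤ c35 := by rcases h35 with h|h <;> linarith
  have ub35 : c35 ≤ 1 := by rcases h35 with h|h <;> linarith
  have lb36 : (0:ℝ) ≤ c36 := by rcases h36 with h|h <;> linarith
  have ub36 : c36 ≤ 1 := by rcases h36 with h|h <;> linarith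
  have lb37 : (0:ℝ) ≤ c37 := by rcases h37 with h|h <;> linarith
  have ub37 : c37 ≤ 1 := by rcases h37 with h|h <;> linarith
  have lb38 : (0:ℝ) ≤ c38 := by rcases h38 with h|h <;> linarith
  have ub38 : c38 ≤ 1 := by rcases h38 with h|h <;> linarith
  have lb39 : (0:ℝ) ≤ c39 := by rcases h39 with h|h <;> linarith
  have ub39 : c39 ≤ 1 := by rcases h39 with h|h <;> linarith
  have lb40 : (0:ℝ) ≤ c40 := by rcases h40 with h|h <;> linarith
  have ub40 : c40 ≤ 1 := by rcases h40 with h|h <;> linarith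
  have lb41 : (0:ℝ) ≤ c41 := by rcases h41 with h|h <;> linarith
  have ub41 : c41 ≤ 1 := by rcases h41 with h|h <;> linarith
  have lb42 : (0:ℝ) ≤ c42 := by rcases h42 with h|h <;> linarith
  have ub42 : c42 ≤ 1 := by rcases h42 with h|h <;> linarith
  have lb43 : (0:ℝ) ≤ c43 := by rcases h43 with h|h <;> linarith
  have ub43 : c43 ≤ 1 := by rcases h43 with h|h <;> linarith
  have lb44 : (0:ℝ) ≤ c44 := by rcases h44 with h|h <;> linarith
  have ub44 : c44 ≤ 1 := by rcases h44 with h|h <;> linarith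
  have lb45 : (0:ℝ) ≤ c45 := by rcases h45 with h|h <;> linarith
  have ub45 : c45 ≤ 1 := by rcases h45 with h|h <;> linarith
  have lb46 : (0:ℝ) ≤ c46 := by rcases h46 with h|h <;> linarith
  have ub46 : c46 ≤ 1 := by rcases h46 with h|h <;> linarith
  have lb47 : (0:ℝ) ≤ c47 := by rcases h47 with h|h <;> linarith
  have ub47 : c47 ≤ 1 := by rcases h47 with h|h <;> linarith
  have lb48 : (0:ℝ) ≤ c48 := by rcases h48 with h|h <;> linarith
  have ub48 : c48 ≤ 1 := by rcases h48 with h|h <;> linarith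
  have lb49 : (0:ℝ) ≤ c49 := by rcases h49 with h|h <;> linarith
  have ub49 : c49 ≤ 1 := by rcases h49 with h|h <;> linarith
  have lb50 : (0:ℝ) ≤ c50 := by rcases h50 with h|h <;> linarith
  have ub50 : c50 ≤ 1 := by rcases h50 with h|h <;> linarith
  rcases h0 with e0 | e0
  · -- c0 = 0
    rcases h1 with e1 | e1
    · -- c1 = 0
      rcases h2 with e2 | e2
      · -- c2 = 0
        rcases h3 with e3 | e3
        · -- c3 = 0
          rcases h6 with e6 | e6
          · -- c6 = 0
            rcases h7 with e7 | e7
            · -- c7 = 0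
              rcases h8 with e8 | e8
              · -- c8 = 0
                rcases h9 with e9 | e9
                · -- c9 = 0
                  rcases h12 with e12 | e12
                  · -- c12 = 0
                    rcases h13 with e13 | e13
                    · -- c13 = 0
                      rcases h14 with e14 | e14
                      · -- c14 = 0
                        linarith only [t0, t1, t2, t3, t7, t8, t10, t11, t14, t17, t18, t20, t22, t23, t27, t29, t31, t34, t35, e0, e2, e3, e6, e7, e8, e9, e12, e13, e14, lb0, ub0, lb2, ub2, lb3, ub3, lb4, ub4, lb6, ub6, lb7, ub7, lb8, ub8, lb9, ub9, lb10, ub10, lb12, ub12, lb13, ub13, lb14, ub14, lb15, ub15, lb17, ub17, lb18, ub18, lb19, ub19, lb20, ub20, lb22, ub22, lb23, ub23, lb24, ub24, lb25, ub25, lb27, ub27, lb29, ub29, lb30, ub30, lb34, ub34, lb35, ub35, lb37, ub37, lb38, ub38, lb41, ub41, lb44, ub44, lb45, ub45]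
                      · -- c14 = 1
                        linarith only [t1, t2, t8, t10, t17, t18, t22, t23, t27, t29, t31, e0, e2, e3, e6, e7, e9, e12, e13, e14, lb0, ub0, lb2, ub2, lb3, ub3, lb6, ub6, lb7, ub7, lb9, ub9, lb10, ub10, lb12, ub12, lb13, ub13, lb14, ub14, lb15, ub15, lb17, ub17, lb18, ub18, lb22, ub22, lb24, ub24, lb25, ub25, lb30, ub30, lb34, ub34, lb41, ub41, lb44, ub44, lb45, ub45]
                    · -- c13 = 1
                      linarith only [t2, t20, t25, t26, t28, e0, e8, e13, lb0, ub0, lb8, ub8, lb13, ub13, lb14, ub14, lb16, ub16, lb20, ub20, lb23, ub23, lb24, ub24, lb26, ub26, lb28, ub28]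
                  · -- c12 = 1
                    linarith only [t2, t17, t23, t24, t27, e0, e6, e12, lb0, ub0, lb6, ub6, lb12, ub12, lb14, ub14, lb15, ub15, lb22, ub22, lb24, ub24, lb25, ub25, lb31, ub31, lb41, ub41]
                · -- c9 = 1
                  linarith only [t1, t8, t11, t18, t21, t22, t26, e0, e2, e3, e7, e9, lb0, ub0, lb2, ub2, lb3, ub3, lb7, ub7, lb9, ub9, lb10, ub10, lb13, ub13, lb18, ub18, lb20, ub20, lb25, ub25, lb28, ub28, lb42, ub42, lb44, ub44, lb45, ub45]
              · -- c8 = 1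
                linarith only [t11, t18, t19, t20, t22, e3, e7, e8, lb3, ub3, lb7, ub7, lb8, ub8, lb10, ub10, lb11, ub11, lb18, ub18, lb20, ub20, lb23, ub23, lb25, ub25, lb44, ub44]
            · -- c7 = 1
              linarith only [t1, t2, t8, t11, t17, t18, t21, t22, t23, t24, t25, t26, t27, t29, e0, e2, e3, e6, e7, lb0, ub0, lb2, ub2, lb3, ub3, lb6, ub6, lb7, ub7, lb9, ub9, lb10, ub10, lb12, ub12, lb13, ub13, lb14, ub14, lb15, ub15, lb16, ub16, lb18, ub18, lb20, ub20, lb22, ub22, lb24, ub24, lb25, ub25, lb28, ub28, lb30, ub30, lb31, ub31, lb41, ub41, lb42, ub42, lb44, ub44, lb45, ub45]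
          · -- c6 = 1
            linarith only [t0, t2, t7, t8, t10, t14, t17, t25, t28, t31, t32, e0, e2, e3, e6, lb0, ub0, lb2, ub2, lb3, ub3, lb4, ub4, lb6, ub6, lb13, ub13, lb14, ub14, lb16, ub16, lb17, ub17, lb19, ub19, lb22, ub22, lb23, ub23, lb24, ub24, lb26, ub26, lb34, ub34, lb38, ub38, lb41, ub41, lb45, ub45, lb46, ub46]
        · -- c3 = 1
          linarith only [t0, t1, t2, t3, t4, t7, t8, t9, t11, t13, t14, t15, t16, t19, t20, t21, t25, t27, t29, t34, t36, e0, e1, e2, e3, lb0, ub0, lb1, ub1, lb2, ub2, lb3, ub3, lb4, ub4, lb5, ub5, lb8, ub8, lb9, ub9, lb11, ub11, lb13, ub13, lb14, ub14, lb15, ub15, lb16, ub16, lb18, ub18, lb19, ub19, lb20, ub20, lb22, ub22, lb23, ub23, lb24, ub24, lb25, ub25, lb27, ub27, lb29, ub29, lb30, ub30, lb36, ub36, lb37, ub37, lb38, ub38, lb39, ub39, lb42, ub42, lb43, ub43, lb44, ub44, lb45, ub45, lb48, ub48, lb49, ub49]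
      · -- c2 = 1
        linarith only [t2, t4, t7, t8, t9, t15, t16, t25, t27, e0, e1, e2, lb0, ub0, lb1, ub1, lb2, ub2, lb4, ub4, lb5, ub5, lb13, ub13, lb14, ub14, lb16, ub16, lb19, ub19, lb22, ub22, lb24, ub24, lb25, ub25, lb36, ub36, lb45, ub45, lb48, ub48, lb49, ub49]
    · -- c1 = 1
      linarith only [t0, t2, t4, t5, t6, t11, t20, t23, t28, t29, e0, e1, lb0, ub0, lb1, ub1, lb3, ub3, lb5, ub5, lb8, ub8, lb12, ub12, lb14, ub14, lb15, ub15, lb18, ub18, lb19, ub19, lb20, ub20, lb23, ub23, lb24, ub24, lb26, ub26, lb30, ub30, lb47, ub47, lb50, ub50]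
  · -- c0 = 1
    rcases h1 with e1 | e1
    · -- c1 = 0
      linarith only [t0, t2, t4, t11, t15, t16, t22, t25, t26, t27, e0, e1, lb0, ub0, lb1, ub1, lb3, ub3, lb5, ub5, lb10, ub10, lb13, ub13, lb14, ub14, lb16, ub16, lb18, ub18, lb19, ub19, lb20, ub20, lb22, ub22, lb24, ub24, lb25, ub25, lb28, ub28, lb48, ub48, lb49, ub49]
    · -- c1 = 1
      rcases h2 with e2 | e2
      · -- c2 = 0
        linarith only [t0, t5, t6, t7, t11, t13, t14, t20, t29, e0, e1, e2, lb0, ub0, lb1, ub1, lb2, ub2, lb3, ub3, lb4, ub4, lb8, ub8, lb15, ub15, lb18, ub18, lb19, ub19, lb20, ub20, lb23, ub23, lb30, ub30, lb38, ub38, lb43, ub43, lb47, ub47, lb50, ub50]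
      · -- c2 = 1
        linarith only [t0, t2, t5, t6, t7, t8, t9, t10, t11, t12, t13, t14, t17, t20, t25, t27, t29, t30, t32, t33, e0, e1, e2, lb0, ub0, lb1, ub1, lb2, ub2, lb3, ub3, lb4, ub4, lb6, ub6, lb8, ub8, lb13, ub13, lb14, ub14, lb15, ub15, lb16, ub16, lb17, ub17, lb18, ub18, lb19, ub19, lb20, ub20, lb21, ub21, lb22, ub22, lb23, ub23, lb24, ub24, lb25, ub25, lb30, ub30, lb32, ub32, lb33, ub33, lb36, ub36, lb38, ub38, lb40, ub40, lb41, ub41, lb43, ub43, lb45, ub45, lb46, ub46, lb47, ub47, lb50, ub50]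

/-- **Kochen–Specker theorem.**  Let `H` be a finite-dimensional complex Hilbert space
with `dim H > 2`.  Then there is no *global valuation* on `H`, i.e. no function `v`
assigning to every self-adjoint bounded linear operator `A` on `H` a real number `v A`
such that:
1. (Value-Rule) `v A` belongs to the spectrum of `A`, and
2. (FUNC) for every continuous `f : ℝ → ℝ`, `v (f A) = f (v A)`, where `f A` is given by
   the (continuous) functional calculus for the self-adjoint operator `A`. -/
theorem kochen_specker_no_global_valuation
    {H : Type*} [NormedAddCommGroup H] [InnerProductSpace ℂ H]
    [FiniteDimensional ℂ H] (hdim : 2 < Module.finrank ℂ H) :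
    ¬ ∃ v : (H →L[ℂ] H) → ℝ,
        ∀ A : H →L[ℂ] H, IsSelfAdjoint A →
          v A ∈ spectrum ℝ A ∧
          ∀ f : ℝ → ℝ, Continuous f → v (cfc f A) = f (v A) := by
  rintro ⟨v, hv⟩
  have hH : 0 < Module.finrank ℂ H := by omega
  obtain ⟨f, hf, hE1⟩ := exists_good_f v hv hH hdim
  have T := triple_rule v hv hH hf hE1
  have C01 : ∀ p : Fin 3 → ℤ, p ≠ 0 → v (pr (yv f p)) = 0 ∨ v (pr (yv f p)) = 1 :=
    fun p hp => v_pr01 v hv hH (yv_ne_zero hf hp)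
  exact ks_contra
    (v (pr (yv f ![0, 0, 1])))
    (v (pr (yv f ![0, 1, -2])))
    (v (pr (yv f ![0, 1, -1])))
    (v (pr (yv f ![0, 1, 0])))
    (v (pr (yv f ![0, 1, 1])))
    (v (pr (yv f ![0, 2, 1])))
    (v (pr (yv f ![1, -5, -2])))
    (v (pr (yv f ![1, -2, -5])))
    (v (pr (yv f ![1, -2, -1])))
    (v (pr (yv f ![1, -2, 0])))
    (v (pr (yv f ![1, -2, 1])))
    (v (pr (yv f ![1, -2, 5])))
    (v (pr (yv f ![1, -1, -2])))
    (v (pr (yv f ![1, -1, -1])))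
    (v (pr (yv f ![1, -1, 0])))
    (v (pr (yv f ![1, -1, 1])))
    (v (pr (yv f ![1, -1, 2])))
    (v (pr (yv f ![1, 0, -2])))
    (v (pr (yv f ![1, 0, -1])))
    (v (pr (yv f ![1, 0, 0])))
    (v (pr (yv f ![1, 0, 1])))
    (v (pr (yv f ![1, 0, 2])))
    (v (pr (yv f ![1, 1, -2])))
    (v (pr (yv f ![1, 1, -1])))
    (v (pr (yv f ![1, 1, 0])))
    (v (pr (yv f ![1, 1, 1])))
    (v (pr (yv f ![1, 1, 2])))
    (v (pr (yv f ![1, 2, -5])))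
    (v (pr (yv f ![1, 2, -1])))
    (v (pr (yv f ![1, 2, 0])))
    (v (pr (yv f ![1, 2, 1])))
    (v (pr (yv f ![1, 5, -2])))
    (v (pr (yv f ![1, 5, 2])))
    (v (pr (yv f ![2, -5, -1])))
    (v (pr (yv f ![2, -5, 1])))
    (v (pr (yv f ![2, -1, -5])))
    (v (pr (yv f ![2, -1, -1])))
    (v (pr (yv f ![2, -1, 0])))
    (v (pr (yv f ![2, -1, 1])))
    (v (pr (yv f ![2, -1, 5])))
    (v (pr (yv f ![2, 0, -1])))
    (v (pr (yv f ![2, 0, 1])))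
    (v (pr (yv f ![2, 1, -5])))
    (v (pr (yv f ![2, 1, -1])))
    (v (pr (yv f ![2, 1, 0])))
    (v (pr (yv f ![2, 1, 1])))
    (v (pr (yv f ![2, 5, 1])))
    (v (pr (yv f ![5, -2, -1])))
    (v (pr (yv f ![5, -1, 2])))
    (v (pr (yv f ![5, 1, -2])))
    (v (pr (yv f ![5, 2, 1])))
    (C01 ![0, 0, 1] (by decide))
    (C01 ![0, 1, -2] (by decide))
    (C01 ![0, 1, -1] (by decide))
    (C01 ![0, 1, 0] (by decide))
    (C01 ![0, 1, 1] (by decide))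
    (C01 ![0, 2, 1] (by decide))
    (C01 ![1, -5, -2] (by decide))
    (C01 ![1, -2, -5] (by decide))
    (C01 ![1, -2, -1] (by decide))
    (C01 ![1, -2, 0] (by decide))
    (C01 ![1, -2, 1] (by decide))
    (C01 ![1, -2, 5] (by decide))
    (C01 ![1, -1, -2] (by decide))
    (C01 ![1, -1, -1] (by decide))
    (C01 ![1, -1, 0] (by decide))
    (C01 ![1, -1, 1] (by decide))
    (C01 ![1, -1, 2] (by decide))
    (C01 ![1, 0, -2] (by decide))
    (C01 ![1, 0, -1] (by decide))
    (C01 ![1, 0, 0] (by decide))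
    (C01 ![1, 0, 1] (by decide))
    (C01 ![1, 0, 2] (by decide))
    (C01 ![1, 1, -2] (by decide))
    (C01 ![1, 1, -1] (by decide))
    (C01 ![1, 1, 0] (by decide))
    (C01 ![1, 1, 1] (by decide))
    (C01 ![1, 1, 2] (by decide))
    (C01 ![1, 2, -5] (by decide))
    (C01 ![1, 2, -1] (by decide))
    (C01 ![1, 2, 0] (by decide))
    (C01 ![1, 2, 1] (by decide))
    (C01 ![1, 5, -2] (by decide))
    (C01 ![1, 5, 2] (by decide))
    (C01 ![2, -5, -1] (by decide))
    (C01 ![2, -5, 1] (by decide))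
    (C01 ![2, -1, -5] (by decide))
    (C01 ![2, -1, -1] (by decide))
    (C01 ![2, -1, 0] (by decide))
    (C01 ![2, -1, 1] (by decide))
    (C01 ![2, -1, 5] (by decide))
    (C01 ![2, 0, -1] (by decide))
    (C01 ![2, 0, 1] (by decide))
    (C01 ![2, 1, -5] (by decide))
    (C01 ![2, 1, -1] (by decide))
    (C01 ![2, 1, 0] (by decide))
    (C01 ![2, 1, 1] (by decide))
    (C01 ![2, 5, 1] (by decide))
    (C01 ![5, -2, -1] (by decide))
    (C01 ![5, -1, 2] (by decide))
    (C01 ![5, 1, -2] (by decide))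
    (C01 ![5, 2, 1] (by decide))
    (T ![0, 0, 1] ![0, 1, 0] ![1, 0, 0] (by decide) (by decide) (by decide) (by decide) (by decide) (by decide))
    (T ![0, 0, 1] ![1, -2, 0] ![2, 1, 0] (by decide) (by decide) (by decide) (by decide) (by decide) (by decide))
    (T ![0, 0, 1] ![1, -1, 0] ![1, 1, 0] (by decide) (by decide) (by decide) (by decide) (by decide) (by decide))
    (T ![0, 0, 1] ![1, 2, 0] ![2, -1, 0] (by decide) (by decide) (by decide) (by decide) (by decide) (by decide))
    (T ![0, 1, -2] ![0, 2, 1] ![1, 0, 0] (by decide) (by decide) (by decide) (by decide) (by decide) (by decide))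
    (T ![0, 1, -2] ![1, -2, -1] ![5, 2, 1] (by decide) (by decide) (by decide) (by decide) (by decide) (by decide))
    (T ![0, 1, -2] ![1, 2, 1] ![5, -2, -1] (by decide) (by decide) (by decide) (by decide) (by decide) (by decide))
    (T ![0, 1, -1] ![0, 1, 1] ![1, 0, 0] (by decide) (by decide) (by decide) (by decide) (by decide) (by decide))
    (T ![0, 1, -1] ![1, -1, -1] ![2, 1, 1] (by decide) (by decide) (by decide) (by decide) (by decide) (by decide))
    (T ![0, 1, -1] ![1, 1, 1] ![2, -1, -1] (by decide) (by decide) (by decide) (by decide) (by decide) (by decide))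
    (T ![0, 1, 0] ![1, 0, -2] ![2, 0, 1] (by decide) (by decide) (by decide) (by decide) (by decide) (by decide))
    (T ![0, 1, 0] ![1, 0, -1] ![1, 0, 1] (by decide) (by decide) (by decide) (by decide) (by decide) (by decide))
    (T ![0, 1, 0] ![1, 0, 2] ![2, 0, -1] (by decide) (by decide) (by decide) (by decide) (by decide) (by decide))
    (T ![0, 1, 1] ![1, -1, 1] ![2, 1, -1] (by decide) (by decide) (by decide) (by decide) (by decide) (by decide))
    (T ![0, 1, 1] ![1, 1, -1] ![2, -1, 1] (by decide) (by decide) (by decide) (by decide) (by decide) (by decide))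
    (T ![0, 2, 1] ![1, -1, 2] ![5, 1, -2] (by decide) (by decide) (by decide) (by decide) (by decide) (by decide))
    (T ![0, 2, 1] ![1, 1, -2] ![5, -1, 2] (by decide) (by decide) (by decide) (by decide) (by decide) (by decide))
    (T ![1, -5, -2] ![1, 1, -2] ![2, 0, 1] (by decide) (by decide) (by decide) (by decide) (by decide) (by decide))
    (T ![1, -2, -5] ![1, -2, 1] ![2, 1, 0] (by decide) (by decide) (by decide) (by decide) (by decide) (by decide))
    (T ![1, -2, -1] ![1, -2, 5] ![2, 1, 0] (by decide) (by decide) (by decide) (by decide) (by decide) (by decide))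
    (T ![1, -2, -1] ![1, 0, 1] ![1, 1, -1] (by decide) (by decide) (by decide) (by decide) (by decide) (by decide))
    (T ![1, -2, 0] ![2, 1, -5] ![2, 1, 1] (by decide) (by decide) (by decide) (by decide) (by decide) (by decide))
    (T ![1, -2, 1] ![1, 0, -1] ![1, 1, 1] (by decide) (by decide) (by decide) (by decide) (by decide) (by decide))
    (T ![1, -1, -2] ![1, -1, 1] ![1, 1, 0] (by decide) (by decide) (by decide) (by decide) (by decide) (by decide))
    (T ![1, -1, -2] ![1, 5, -2] ![2, 0, 1] (by decide) (by decide) (by decide) (by decide) (by decide) (by decide))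
    (T ![1, -1, -1] ![1, -1, 2] ![1, 1, 0] (by decide) (by decide) (by decide) (by decide) (by decide) (by decide))
    (T ![1, -1, -1] ![1, 0, 1] ![1, 2, -1] (by decide) (by decide) (by decide) (by decide) (by decide) (by decide))
    (T ![1, -1, 0] ![1, 1, -2] ![1, 1, 1] (by decide) (by decide) (by decide) (by decide) (by decide) (by decide))
    (T ![1, -1, 0] ![1, 1, -1] ![1, 1, 2] (by decide) (by decide) (by decide) (by decide) (by decide) (by decide))
    (T ![1, -1, 1] ![1, 0, -1] ![1, 2, 1] (by decide) (by decide) (by decide) (by decide) (by decide) (by decide))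
    (T ![1, -1, 2] ![1, 5, 2] ![2, 0, -1] (by decide) (by decide) (by decide) (by decide) (by decide) (by decide))
    (T ![1, 0, -2] ![2, -5, 1] ![2, 1, 1] (by decide) (by decide) (by decide) (by decide) (by decide) (by decide))
    (T ![1, 0, -2] ![2, -1, 1] ![2, 5, 1] (by decide) (by decide) (by decide) (by decide) (by decide) (by decide))
    (T ![1, 0, 2] ![2, -5, -1] ![2, 1, -1] (by decide) (by decide) (by decide) (by decide) (by decide) (by decide))
    (T ![1, 2, -5] ![1, 2, 1] ![2, -1, 0] (by decide) (by decide) (by decide) (by decide) (by decide) (by decide))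
    (T ![1, 2, 0] ![2, -1, -5] ![2, -1, 1] (by decide) (by decide) (by decide) (by decide) (by decide) (by decide))
    (T ![1, 2, 0] ![2, -1, -1] ![2, -1, 5] (by decide) (by decide) (by decide) (by decide) (by decide) (by decide))
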